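/- arXiv:2408.16576 — 2 statements merged into one kernel-verified Lean document; each statement's English description precedes it below -/
import Mathlib

section
/- Let $v \geq 1$, set $K = \lfloor \log v / \log 2 \rfloor$, and define $\mathcal{C}_v(K) = \max_{w \leq v} \max \{ \binom{v}{w} \prod_{k=0}^{K} \binom{v}{a_k} : a_0, \ldots, a_K \geq 0,\ w + a_0 + \cdots + a_K \leq v,\ a_j \leq v 2^{-j} \text{ for all } j \}$. Then $\mathcal{C}_v(K) \leq (16\sqrt{2e})^v$. -/
open Finset Real

private lemma aux_choose_two_pow (n k : ℕ) : (n.choose k : ℝ) ≤ 2 ^ n := by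
  have h : n.choose k ≤ 2 ^ n := by
    rcases le_or_gt k n with h | h
    · calc n.choose k ≤ ∑ i ∈ Finset.range (n + 1), n.choose i :=
          Finset.single_le_sum (fun i _ => Nat.zero_le _)
            (Finset.mem_range.2 (Nat.lt_succ_of_le h))
      _ = 2 ^ n := Nat.sum_range_choose n
    · simp [Nat.choose_eq_zero_of_lt h]
  exact_mod_cast h

private lemma aux_key (v j aj : ℕ) (hv : 1 ≤ v) (haj : (aj : ℝ) ≤ (v : ℝ) / 2 ^ j) :
    (v.choose aj : ℝ) ≤ (2 : ℝ) ^ ((j : ℝ) * ((v : ℝ) / 2 ^ j)) * Real.exp ((v : ℝ) / 2 ^ j) := by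
  set t : ℝ := (v : ℝ) / 2 ^ j with ht_def
  have h2j : (0 : ℝ) < 2 ^ j := by positivity
  have hvpos : (0 : ℝ) < v := by exact_mod_cast hv
  have ht : 0 < t := by positivity
  have h1 : (v.choose aj : ℝ) ≤ (v : ℝ) ^ aj / (Nat.factorial aj : ℝ) := by
    have := Nat.choose_le_pow_div (α := ℝ) aj v
    push_cast at this ⊢
    exact this
  have h2 : t ^ aj / (Nat.factorial aj : ℝ) ≤ Real.exp t :=
    Real.pow_div_factorial_le_exp t ht.le aj
  have hfact : (0 : ℝ) < (Nat.factorial aj : ℝ) := by exact_mod_cast Nat.factorial_pos aj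
  have hveq : (v : ℝ) = 2 ^ j * t := by rw [ht_def]; field_simp
  have h3 : (v : ℝ) ^ aj / (Nat.factorial aj : ℝ)
      = ((2 : ℝ) ^ j) ^ aj * (t ^ aj / (Nat.factorial aj : ℝ)) := by
    rw [hveq, mul_pow]; ring
  have h4 : ((2 : ℝ) ^ j) ^ aj ≤ (2 : ℝ) ^ ((j : ℝ) * t) := by
    rw [← pow_mul, ← Real.rpow_natCast 2 (j * aj)]
    apply Real.rpow_le_rpow_of_exponent_le one_le_two
    push_cast
    exact mul_le_mul_of_nonneg_left haj (by positivity)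
  calc (v.choose aj : ℝ) ≤ (v : ℝ) ^ aj / (Nat.factorial aj : ℝ) := h1
    _ = ((2 : ℝ) ^ j) ^ aj * (t ^ aj / (Nat.factorial aj : ℝ)) := h3
    _ ≤ (2 : ℝ) ^ ((j : ℝ) * t) * Real.exp t :=
        mul_le_mul h4 h2 (by positivity) (by positivity)

private lemma aux_geo (m : ℕ) : ∑ i ∈ Finset.range m, ((1 : ℝ) / 2) ^ i
    = 2 - 2 * (1 / 2) ^ m := by
  induction m with
  | zero => simp
  | succ n ih => rw [Finset.sum_range_succ, ih]; ring

private lemma aux_geo2 (m : ℕ) : ∑ i ∈ Finset.range m, (i : ℝ) * ((1 : ℝ) / 2) ^ i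
    = 2 - ((m : ℝ) + 1) * 2 * (1 / 2) ^ m := by
  induction m with
  | zero => simp
  | succ n ih => rw [Finset.sum_range_succ, ih]; push_cast; ring

/-- Lemma `combilemma`: for `v ≥ 1` and `K = ⌊log v / log 2⌋`, every admissible
choice of `w` and `a₀,…,a_K` satisfies
`C(v,w) ∏_k C(v,a_k) ≤ (16 √(2e))^v`, i.e. the maximum `𝒞_v(K)` is at most `(16√(2e))^v`. -/
theorem stmt_0 (v : ℕ) (hv : 1 ≤ v) (K : ℕ) (hK : K = ⌊Real.log v / Real.log 2⌋₊)
    (w : ℕ) (hw : w ≤ v) (a : ℕ → ℕ)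
    (hsum : w + ∑ j ∈ Finset.range (K + 1), a j ≤ v)
    (ha : ∀ j ≤ K, (a j : ℝ) ≤ (v : ℝ) / 2 ^ j) :
    ((Nat.choose v w * ∏ j ∈ Finset.range (K + 1), Nat.choose v (a j) : ℕ) : ℝ)
      ≤ (16 * Real.sqrt (2 * Real.exp 1)) ^ v := by
  have hcw := aux_choose_two_pow v w
  have hexp1 : (2 : ℝ) ≤ Real.exp 1 := by
    have := Real.add_one_le_exp (1 : ℝ); linarith
  have hspos : (0 : ℝ) < Real.sqrt (2 * Real.exp 1) := Real.sqrt_pos.mpr (by positivity)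
  have hs1 : (1 : ℝ) ≤ Real.sqrt (2 * Real.exp 1) := by
    have h := Real.sqrt_le_sqrt (show (1 : ℝ) ≤ 2 * Real.exp 1 by nlinarith)
    rwa [Real.sqrt_one] at h
  push_cast
  rcases Nat.eq_zero_or_pos K with hK0 | hKpos
  · subst hK0
    rw [Finset.prod_range_one]
    calc (v.choose w : ℝ) * (v.choose (a 0) : ℝ) ≤ 2 ^ v * 2 ^ v :=
        mul_le_mul hcw (aux_choose_two_pow v (a 0)) (Nat.cast_nonneg _) (by positivity)
      _ = 4 ^ v := by rw [← mul_pow]; norm_num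
      _ ≤ (16 * Real.sqrt (2 * Real.exp 1)) ^ v := by
          apply pow_le_pow_left₀ (by norm_num)
          nlinarith
  · obtain ⟨m, rfl⟩ : ∃ m, K = m + 1 := ⟨K - 1, by omega⟩
    rw [show m + 1 + 1 = 2 + m by omega, Finset.prod_range_add]
    have h01 : ∏ j ∈ Finset.range 2, (v.choose (a j) : ℝ) ≤ 2 ^ v * 2 ^ v := by
      rw [Finset.prod_range_succ, Finset.prod_range_one]
      exact mul_le_mul (aux_choose_two_pow v (a 0)) (aux_choose_two_pow v (a 1))
        (Nat.cast_nonneg _) (by positivity)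
    -- the tail product
    have hterm : ∀ i ∈ Finset.range m, (v.choose (a (2 + i)) : ℝ)
        ≤ (2 : ℝ) ^ (((2 + i : ℕ) : ℝ) * ((v : ℝ) / 2 ^ (2 + i)))
            * Real.exp ((v : ℝ) / 2 ^ (2 + i)) := by
      intro i hi
      exact aux_key v (2 + i) (a (2 + i)) hv (ha (2 + i) (by simp at hi; omega))
    have hsum2 : ∑ i ∈ Finset.range m, (v : ℝ) / 2 ^ (2 + i) ≤ (v : ℝ) / 2 := by
      have heq : ∀ i ∈ Finset.range m, (v : ℝ) / 2 ^ (2 + i)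
          = (v : ℝ) / 4 * ((1 : ℝ) / 2) ^ i := by
        intro i _
        rw [pow_add, div_pow, one_pow]
        have h2i : ((2 : ℝ) ^ i) ≠ 0 := by positivity
        field_simp
        norm_num
      rw [Finset.sum_congr rfl heq, ← Finset.mul_sum, aux_geo]
      have h0 : (0 : ℝ) ≤ ((1 : ℝ) / 2) ^ m := by positivity
      have hv0 : (0 : ℝ) ≤ v := Nat.cast_nonneg v
      nlinarith
    have hsum1 : ∑ i ∈ Finset.range m, ((2 + i : ℕ) : ℝ) * ((v : ℝ) / 2 ^ (2 + i))
        ≤ 3 / 2 * (v : ℝ) := by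
      have heq : ∀ i ∈ Finset.range m, ((2 + i : ℕ) : ℝ) * ((v : ℝ) / 2 ^ (2 + i))
          = (v : ℝ) / 4 * (2 * ((1 : ℝ) / 2) ^ i + (i : ℝ) * ((1 : ℝ) / 2) ^ i) := by
        intro i _
        push_cast
        rw [pow_add, div_pow, one_pow]
        have h2i : ((2 : ℝ) ^ i) ≠ 0 := by positivity
        field_simp
        ring
      rw [Finset.sum_congr rfl heq, ← Finset.mul_sum, Finset.sum_add_distrib,
        ← Finset.mul_sum, aux_geo, aux_geo2]
      have h0 : (0 : ℝ) ≤ ((1 : ℝ) / 2) ^ m := by positivity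
      have hm0 : (0 : ℝ) ≤ (m : ℝ) := Nat.cast_nonneg m
      have hv0 : (0 : ℝ) ≤ v := Nat.cast_nonneg v
      nlinarith [mul_nonneg (mul_nonneg hm0 h0) hv0, mul_nonneg h0 hv0]
    have hrest : ∏ i ∈ Finset.range m, (v.choose (a (2 + i)) : ℝ)
        ≤ (2 : ℝ) ^ ((3 : ℝ) / 2 * (v : ℝ)) * Real.exp ((v : ℝ) / 2) := by
      calc ∏ i ∈ Finset.range m, (v.choose (a (2 + i)) : ℝ)
          ≤ ∏ i ∈ Finset.range m, ((2 : ℝ) ^ (((2 + i : ℕ) : ℝ) * ((v : ℝ) / 2 ^ (2 + i)))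
              * Real.exp ((v : ℝ) / 2 ^ (2 + i))) :=
            Finset.prod_le_prod (fun i _ => Nat.cast_nonneg _) hterm
        _ = (2 : ℝ) ^ (∑ i ∈ Finset.range m, ((2 + i : ℕ) : ℝ) * ((v : ℝ) / 2 ^ (2 + i)))
              * Real.exp (∑ i ∈ Finset.range m, (v : ℝ) / 2 ^ (2 + i)) := by
            rw [Real.rpow_sum_of_pos two_pos, Real.exp_sum, ← Finset.prod_mul_distrib]
        _ ≤ (2 : ℝ) ^ ((3 : ℝ) / 2 * (v : ℝ)) * Real.exp ((v : ℝ) / 2) := by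
            apply mul_le_mul (Real.rpow_le_rpow_of_exponent_le one_le_two hsum1)
              (Real.exp_le_exp.mpr hsum2) (Real.exp_pos _).le (by positivity)
    have key_eq : (2 : ℝ) ^ v * (2 ^ v * 2 ^ v
          * ((2 : ℝ) ^ ((3 : ℝ) / 2 * (v : ℝ)) * Real.exp ((v : ℝ) / 2)))
        = (16 * Real.sqrt (2 * Real.exp 1)) ^ v := by
      have hlog : Real.log (16 * Real.sqrt (2 * Real.exp 1))
          = 4 * Real.log 2 + 1 / 2 * (Real.log 2 + 1) := by
        rw [Real.log_mul (by norm_num) (ne_of_gt hspos), Real.log_sqrt (by positivity),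
          Real.log_mul (by norm_num) (Real.exp_ne_zero 1), Real.log_exp,
          show (16 : ℝ) = 2 ^ (4 : ℕ) by norm_num, Real.log_pow]
        push_cast; ring
      have p1 : (2 : ℝ) ^ v = Real.exp ((v : ℝ) * Real.log 2) := by
        rw [Real.exp_nat_mul, Real.exp_log two_pos]
      have p2 : (2 : ℝ) ^ ((3 : ℝ) / 2 * (v : ℝ))
          = Real.exp ((3 : ℝ) / 2 * (v : ℝ) * Real.log 2) := by
        rw [Real.rpow_def_of_pos two_pos]; ring_nf
      have p3 : (16 * Real.sqrt (2 * Real.exp 1)) ^ v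
          = Real.exp ((v : ℝ) * Real.log (16 * Real.sqrt (2 * Real.exp 1))) := by
        rw [Real.exp_nat_mul, Real.exp_log (by positivity)]
      rw [p1, p2, p3, hlog, ← Real.exp_add, ← Real.exp_add, ← Real.exp_add, ← Real.exp_add]
      congr 1
      ring
    calc (v.choose w : ℝ) * ((∏ j ∈ Finset.range 2, (v.choose (a j) : ℝ))
            * ∏ i ∈ Finset.range m, (v.choose (a (2 + i)) : ℝ))
        ≤ (2 : ℝ) ^ v * (2 ^ v * 2 ^ v
            * ((2 : ℝ) ^ ((3 : ℝ) / 2 * (v : ℝ)) * Real.exp ((v : ℝ) / 2))) := by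
          apply mul_le_mul hcw
            (mul_le_mul h01 hrest (Finset.prod_nonneg fun i _ => Nat.cast_nonneg _)
              (by positivity))
            (mul_nonneg (Finset.prod_nonneg fun i _ => Nat.cast_nonneg _)
              (Finset.prod_nonneg fun i _ => Nat.cast_nonneg _))
            (by positivity)
      _ = (16 * Real.sqrt (2 * Real.exp 1)) ^ v := key_eq
end

section
/- There exists an absolute constant $B > 0$ such that for all integers $k \geq 2$, $\sum_{m \geq 1} \tau_k(m^2)/m^2 \leq (\log(Bk))^{11k}$, where $\tau_k$ is the $k$-fold divisor function. -/
/-- The `k`-fold divisor function: the number of ordered `k`-tuples of positive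
integers with product `n`. -/
noncomputable def tauk (k n : ℕ) : ℕ :=
  Nat.card {f : Fin k → ℕ // (∀ i, 0 < f i) ∧ ∏ i, f i = n}

open Finset

namespace TaukAux


def Tset (k n : ℕ) : Finset (Fin k → ℕ) :=
  (Fintype.piFinset fun _ : Fin k => n.divisors).filter fun f => ∏ i, f i = n

lemma mem_Tset {k n : ℕ} (hn : n ≠ 0) {f : Fin k → ℕ} :
    f ∈ Tset k n ↔ (∀ i, 0 < f i) ∧ ∏ i, f i = n := by
  simp only [Tset, mem_filter, Fintype.mem_piFinset]
  constructor
  · rintro ⟨h1, h2⟩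
    exact ⟨fun i => Nat.pos_of_mem_divisors (h1 i), h2⟩
  · rintro ⟨h1, h2⟩
    refine ⟨fun i => Nat.mem_divisors.mpr ⟨?_, hn⟩, h2⟩
    rw [← h2]; exact Finset.dvd_prod_of_mem f (Finset.mem_univ i)

lemma tauk_eq_card (k n : ℕ) (hn : n ≠ 0) : tauk k n = (Tset k n).card := by
  have e : {f : Fin k → ℕ // (∀ i, 0 < f i) ∧ ∏ i, f i = n} ≃ {f // f ∈ Tset k n} :=
    Equiv.subtypeEquivRight fun f => (mem_Tset hn).symm
  rw [tauk, Nat.card_congr e, Nat.card_eq_fintype_card, Fintype.card_coe]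

lemma tauk_succ (k n : ℕ) (hn : n ≠ 0) :
    tauk (k + 1) n = ∑ d ∈ n.divisors, tauk k d := by
  rw [tauk_eq_card _ _ hn]
  have hmap : ∀ f ∈ Tset (k + 1) n, (∏ i : Fin k, f i.succ) ∈ n.divisors := by
    intro f hf
    rw [mem_Tset hn] at hf
    refine Nat.mem_divisors.mpr ⟨?_, hn⟩
    rw [← hf.2, Fin.prod_univ_succ]
    exact dvd_mul_left _ _
  rw [Finset.card_eq_sum_card_fiberwise hmap]
  refine Finset.sum_congr rfl fun d hd => ?_
  obtain ⟨hdvd, -⟩ := Nat.mem_divisors.mp hd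
  have hd0 : d ≠ 0 := fun h => hn (Nat.eq_zero_of_zero_dvd (h ▸ hdvd))
  rw [tauk_eq_card _ _ hd0]
  refine Finset.card_bij' (fun f _ => Fin.tail f) (fun g _ => Fin.cons (n / d) g)
    ?_ ?_ ?_ ?_
  · intro f hf
    rw [mem_filter] at hf
    obtain ⟨hf1, hf2⟩ := hf
    rw [mem_Tset hn] at hf1
    rw [mem_Tset hd0]
    exact ⟨fun i => hf1.1 i.succ, hf2⟩
  · intro g hg
    rw [mem_Tset hd0] at hg
    have hnd : 0 < n / d := Nat.div_pos (Nat.le_of_dvd (Nat.pos_of_ne_zero hn) hdvd)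
      (Nat.pos_of_ne_zero hd0)
    rw [mem_filter]
    constructor
    · rw [mem_Tset hn]
      constructor
      · intro i
        refine Fin.cases ?_ ?_ i
        · simpa using hnd
        · intro j; simpa using hg.1 j
      · rw [Fin.prod_univ_succ]
        simp only [Fin.cons_zero, Fin.cons_succ]
        rw [hg.2, Nat.div_mul_cancel hdvd]
    · simp only [Fin.cons_succ]
      exact hg.2
  · intro f hf
    rw [mem_filter] at hf
    obtain ⟨hf1, hf2⟩ := hf
    rw [mem_Tset hn] at hf1
    have h0 : f 0 = n / d := by
      have : f 0 * d = n := by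
        rw [← hf2, ← Fin.prod_univ_succ f]
        exact hf1.2
      rw [← this, Nat.mul_div_cancel _ (Nat.pos_of_ne_zero hd0)]
    show Fin.cons (n / d) (Fin.tail f) = f
    rw [← h0]
    exact Fin.cons_self_tail f
  · intro g hg
    exact Fin.tail_cons (α := fun _ : Fin (k+1) => ℕ) (n / d) g

lemma tauk_zero (n : ℕ) : tauk 0 n = if n = 1 then 1 else 0 := by
  rcases eq_or_ne n 1 with rfl | hn
  · simp only [if_pos rfl]
    rw [tauk]
    have : Unique {f : Fin 0 → ℕ // (∀ i, 0 < f i) ∧ ∏ i, f i = 1} :=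
      ⟨⟨⟨fun i => i.elim0, fun i => i.elim0, by simp⟩⟩,
       fun f => Subtype.ext (funext fun i => i.elim0)⟩
    exact Nat.card_unique
  · simp only [if_neg hn]
    rw [tauk]
    have : IsEmpty {f : Fin 0 → ℕ // (∀ i, 0 < f i) ∧ ∏ i, f i = n} := by
      refine ⟨fun f => hn ?_⟩
      rw [← f.2.2]
      simp
    exact Nat.card_of_isEmpty

end TaukAux

namespace TaukAux

open ArithmeticFunction
open scoped ArithmeticFunction.zeta

lemma tauk_eq_zeta_pow (k : ℕ) : ∀ n : ℕ, n ≠ 0 →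
    tauk k n = (ζ ^ k : ArithmeticFunction ℕ) n := by
  induction k with
  | zero =>
    intro n hn
    rw [pow_zero, tauk_zero, ArithmeticFunction.one_apply]
  | succ k ih =>
    intro n hn
    rw [pow_succ, mul_zeta_apply, tauk_succ k n hn]
    refine Finset.sum_congr rfl fun d hd => ?_
    exact ih d (Nat.pos_of_mem_divisors hd).ne'

lemma isMult_zeta_pow (k : ℕ) : (ζ ^ k : ArithmeticFunction ℕ).IsMultiplicative := by
  induction k with
  | zero => rw [pow_zero]; exact isMultiplicative_one
  | succ k ih => rw [pow_succ]; exact ih.mul isMultiplicative_zeta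

lemma tauk_one (k : ℕ) : tauk k 1 = 1 := by
  rw [tauk_eq_zeta_pow k 1 one_ne_zero, (isMult_zeta_pow k).map_one]

lemma tauk_mul {k m n : ℕ} (h : Nat.Coprime m n) (hm : m ≠ 0) (hn : n ≠ 0) :
    tauk k (m * n) = tauk k m * tauk k n := by
  rw [tauk_eq_zeta_pow k _ (mul_ne_zero hm hn), tauk_eq_zeta_pow k m hm,
    tauk_eq_zeta_pow k n hn, (isMult_zeta_pow k).map_mul_of_coprime h]

lemma tauk_pp_succ {p : ℕ} (hp : p.Prime) (k b : ℕ) :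
    tauk (k + 1) (p ^ b) = ∑ j ∈ Finset.range (b + 1), tauk k (p ^ j) := by
  rw [tauk_succ k _ (pow_ne_zero b hp.pos.ne'), Nat.sum_divisors_prime_pow hp]

lemma geom_nat_le (k b : ℕ) : ∑ j ∈ Finset.range (b + 1), k ^ j ≤ (k + 1) ^ b := by
  induction b with
  | zero => simp
  | succ b ih =>
    rw [Finset.sum_range_succ, pow_succ]
    have h1 : k ^ (b + 1) ≤ k * (k + 1) ^ b := by
      rw [pow_succ, mul_comm]
      exact Nat.mul_le_mul_left k (Nat.pow_le_pow_left (Nat.le_succ k) b)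
    calc ∑ j ∈ Finset.range (b + 1), k ^ j + k ^ (b + 1)
        ≤ (k + 1) ^ b + k * (k + 1) ^ b := Nat.add_le_add ih h1
      _ = (k + 1) ^ b * (k + 1) := by ring

lemma tauk_pp_eq_ite_zero {p : ℕ} (hp : p.Prime) (b : ℕ) :
    tauk 0 (p ^ b) = if b = 0 then 1 else 0 := by
  rcases Nat.eq_zero_or_pos b with rfl | hb
  · simpa using tauk_one 0
  · rw [tauk_zero, if_neg (Nat.one_lt_pow hb.ne' hp.one_lt).ne', if_neg hb.ne']

lemma tauk_pp_le_k_pow {p : ℕ} (hp : p.Prime) : ∀ k b, tauk k (p ^ b) ≤ k ^ b := by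
  intro k
  induction k with
  | zero =>
    intro b
    rw [tauk_pp_eq_ite_zero hp]
    rcases Nat.eq_zero_or_pos b with rfl | hb
    · simp
    · simp [hb.ne']
  | succ k ih =>
    intro b
    rw [tauk_pp_succ hp]
    calc ∑ j ∈ Finset.range (b + 1), tauk k (p ^ j)
        ≤ ∑ j ∈ Finset.range (b + 1), k ^ j := Finset.sum_le_sum fun j _ => ih j
      _ ≤ (k + 1) ^ b := geom_nat_le k b

lemma tauk_pp_le_poly {p : ℕ} (hp : p.Prime) : ∀ k b, tauk k (p ^ b) ≤ (b + 1) ^ k := by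
  intro k
  induction k with
  | zero =>
    intro b
    rw [tauk_pp_eq_ite_zero hp]
    split <;> simp
  | succ k ih =>
    intro b
    rw [tauk_pp_succ hp]
    calc ∑ j ∈ Finset.range (b + 1), tauk k (p ^ j)
        ≤ ∑ j ∈ Finset.range (b + 1), (b + 1) ^ k :=
          Finset.sum_le_sum fun j hj => le_trans (ih j)
            (Nat.pow_le_pow_left (by have := Finset.mem_range.mp hj; omega) k)
      _ = (b + 1) ^ (k + 1) := by
          rw [Finset.sum_const, Finset.card_range, smul_eq_mul, pow_succ, mul_comm]

end TaukAux

namespace TaukAux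

open Finset

lemma geom_real_le {x : ℝ} (hx0 : 0 ≤ x) (hx1 : x < 1) (B : ℕ) :
    ∑ i ∈ range B, x ^ i ≤ (1 - x)⁻¹ := by
  have h1 : 0 < 1 - x := by linarith
  rw [geom_sum_eq hx1.ne B]
  have h2 : (x ^ B - 1) / (x - 1) = (1 - x ^ B) / (1 - x) := by
    rw [← neg_div_neg_eq]; ring_nf
  rw [h2, inv_eq_one_div]
  gcongr
  nlinarith [pow_nonneg hx0 B]

lemma local_sum_le {p : ℕ} (hp : p.Prime) {x : ℝ} (hx0 : 0 ≤ x) (hx1 : x < 1) :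
    ∀ k B : ℕ, ∑ b ∈ range B, (tauk k (p ^ b) : ℝ) * x ^ b ≤ ((1 - x)⁻¹) ^ k := by
  have h1x : 0 < 1 - x := by linarith
  intro k
  induction k with
  | zero =>
    intro B
    rw [pow_zero]
    calc ∑ b ∈ range B, (tauk 0 (p ^ b) : ℝ) * x ^ b
        ≤ ∑ b ∈ range B, if b = 0 then 1 else 0 := by
          refine sum_le_sum fun b _ => ?_
          rw [tauk_pp_eq_ite_zero hp]
          split
          · rename_i h; subst h; simp
          · simp
      _ ≤ 1 := by
          rw [Finset.sum_ite_eq' (range B) 0 (fun _ => (1 : ℝ))]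
          split <;> norm_num
  | succ k ih =>
    intro B
    calc ∑ b ∈ range B, (tauk (k + 1) (p ^ b) : ℝ) * x ^ b
        = ∑ b ∈ range B, ∑ j ∈ range B,
            (if j ≤ b then (tauk k (p ^ j) : ℝ) * x ^ b else 0) := by
          refine sum_congr rfl fun b hb => ?_
          rw [← Finset.sum_filter]
          have hfil : Finset.filter (fun j => j ≤ b) (Finset.range B)
              = Finset.range (b + 1) := by
            ext j
            simp only [Finset.mem_filter, Finset.mem_range]
            have := Finset.mem_range.mp hb; omega
          rw [hfil, ← Finset.sum_mul, ← Nat.cast_sum, ← tauk_pp_succ hp k b]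
      _ = ∑ j ∈ range B, ∑ b ∈ range B,
            (if j ≤ b then (tauk k (p ^ j) : ℝ) * x ^ b else 0) := Finset.sum_comm
      _ ≤ ∑ j ∈ range B, (tauk k (p ^ j) : ℝ) * x ^ j * (1 - x)⁻¹ := by
          refine sum_le_sum fun j _ => ?_
          rw [← Finset.sum_filter, ← Finset.mul_sum]
          have hsub : ∑ b ∈ Finset.filter (fun b => j ≤ b) (Finset.range B), x ^ b
              ≤ x ^ j * (1 - x)⁻¹ := by
            have himg : Finset.filter (fun b => j ≤ b) (Finset.range B)
                ⊆ (Finset.range B).image (fun i => j + i) := by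
              intro b hb
              simp only [Finset.mem_filter, Finset.mem_range] at hb
              refine Finset.mem_image.mpr ⟨b - j, Finset.mem_range.mpr (by omega), by omega⟩
            calc ∑ b ∈ Finset.filter (fun b => j ≤ b) (Finset.range B), x ^ b
                ≤ ∑ b ∈ (Finset.range B).image (fun i => j + i), x ^ b :=
                  Finset.sum_le_sum_of_subset_of_nonneg himg
                    (fun b _ _ => pow_nonneg hx0 b)
              _ = ∑ i ∈ Finset.range B, x ^ (j + i) :=
                  Finset.sum_image (fun a _ b _ h => by omega)
              _ = x ^ j * ∑ i ∈ Finset.range B, x ^ i := by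
                  rw [Finset.mul_sum]
                  exact Finset.sum_congr rfl fun i _ => pow_add x j i
              _ ≤ x ^ j * (1 - x)⁻¹ :=
                  mul_le_mul_of_nonneg_left (geom_real_le hx0 hx1 B) (pow_nonneg hx0 j)
          rw [mul_assoc]
          exact mul_le_mul_of_nonneg_left hsub (Nat.cast_nonneg _)
      _ = (∑ j ∈ range B, (tauk k (p ^ j) : ℝ) * x ^ j) * (1 - x)⁻¹ :=
          (Finset.sum_mul _ _ _).symm
      _ ≤ (1 - x)⁻¹ ^ k * (1 - x)⁻¹ :=
          mul_le_mul_of_nonneg_right (ih B) (inv_nonneg.mpr h1x.le)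
      _ = (1 - x)⁻¹ ^ (k + 1) := (pow_succ _ k).symm

end TaukAux

namespace TaukAux

open Finset

noncomputable def gfun (k : ℕ) : ℕ → ℝ := fun n => (tauk k (n ^ 2) : ℝ) / (n : ℝ) ^ 2

lemma gfun_nonneg (k n : ℕ) : 0 ≤ gfun k n :=
  div_nonneg (Nat.cast_nonneg _) (by positivity)

lemma gfun_zero (k : ℕ) : gfun k 0 = 0 := by simp [gfun]

lemma gfun_one (k : ℕ) : gfun k 1 = 1 := by simp [gfun, tauk_one]

lemma gfun_mul (k : ℕ) {m n : ℕ} (h : Nat.Coprime m n) :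
    gfun k (m * n) = gfun k m * gfun k n := by
  rcases eq_or_ne m 0 with rfl | hm
  · simp [gfun_zero]
  rcases eq_or_ne n 0 with rfl | hn
  · simp [gfun_zero]
  · unfold gfun
    rw [mul_pow, tauk_mul (Nat.Coprime.pow 2 2 h) (pow_ne_zero _ hm) (pow_ne_zero _ hn)]
    have hm' : ((m : ℝ)) ≠ 0 := Nat.cast_ne_zero.mpr hm
    have hn' : ((n : ℝ)) ≠ 0 := Nat.cast_ne_zero.mpr hn
    push_cast
    rw [mul_pow, div_mul_div_comm]

lemma gfun_pp (k p e : ℕ) :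
    gfun k (p ^ e) = (tauk k (p ^ (2 * e)) : ℝ) * ((p : ℝ)⁻¹) ^ (2 * e) := by
  unfold gfun
  rw [← pow_mul, mul_comm e 2]
  push_cast
  rw [← pow_mul, mul_comm e 2, div_eq_mul_inv, ← inv_pow]

lemma summable_gfun_pp (k : ℕ) {p : ℕ} (hp : p.Prime) :
    Summable fun e => gfun k (p ^ e) := by
  have hp1 : (1 : ℝ) < p := by exact_mod_cast hp.one_lt
  set r : ℝ := ((p : ℝ)⁻¹) ^ 2 with hr
  have hr0 : (0 : ℝ) ≤ r := by positivity
  have hr1 : r < 1 := by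
    have h := inv_lt_one_of_one_lt₀ hp1
    have h0 : (0:ℝ) ≤ (p:ℝ)⁻¹ := by positivity
    nlinarith
  have hmaj : Summable fun e : ℕ => (3 : ℝ) ^ k * ((e : ℝ) ^ k * r ^ e) + (3 : ℝ) ^ k * r ^ e := by
    refine Summable.add (Summable.mul_left _ ?_) (Summable.mul_left _ ?_)
    · simpa using summable_pow_mul_geometric_of_norm_lt_one k
        (by rwa [Real.norm_eq_abs, abs_of_nonneg hr0] : ‖r‖ < 1)
    · exact summable_geometric_of_lt_one hr0 hr1
  refine Summable.of_nonneg_of_le (fun e => gfun_nonneg _ _) (fun e => ?_) hmaj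
  rw [gfun_pp]
  have h2 : ((p : ℝ)⁻¹) ^ (2 * e) = r ^ e := by rw [hr, ← pow_mul]
  have h1 : (tauk k (p ^ (2 * e)) : ℝ) ≤ ((2 * e + 1 : ℕ) : ℝ) ^ k := by
    exact_mod_cast tauk_pp_le_poly hp k (2 * e)
  have h3 : ((2 * e + 1 : ℕ) : ℝ) ^ k ≤ 3 ^ k * (e : ℝ) ^ k + 3 ^ k := by
    rcases Nat.eq_zero_or_pos e with rfl | he
    · simp only [Nat.cast_zero]
      have : ((2 * 0 + 1 : ℕ) : ℝ) ^ k = 1 := by norm_num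
      rw [this]
      have h4 : (0:ℝ) ≤ 3 ^ k * (0:ℝ) ^ k := by positivity
      have h5 : (1:ℝ) ≤ 3 ^ k := by
        have := pow_le_pow_left₀ (by norm_num : (0:ℝ) ≤ 1) (by norm_num : (1:ℝ) ≤ 3) k
        simpa using this
      linarith
    · have hcast : ((2 * e + 1 : ℕ) : ℝ) ≤ 3 * (e : ℝ) := by
        have : (1:ℝ) ≤ (e:ℝ) := by exact_mod_cast he
        push_cast; linarith
      calc ((2 * e + 1 : ℕ) : ℝ) ^ k ≤ (3 * (e : ℝ)) ^ k :=
            pow_le_pow_left₀ (by positivity) hcast k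
        _ = 3 ^ k * (e : ℝ) ^ k := mul_pow _ _ _
        _ ≤ 3 ^ k * (e : ℝ) ^ k + 3 ^ k := le_add_of_nonneg_right (by positivity)
  rw [h2]
  calc (tauk k (p ^ (2 * e)) : ℝ) * r ^ e
      ≤ (3 ^ k * (e : ℝ) ^ k + 3 ^ k) * r ^ e :=
        mul_le_mul_of_nonneg_right (h1.trans h3) (pow_nonneg hr0 e)
    _ = 3 ^ k * ((e : ℝ) ^ k * r ^ e) + 3 ^ k * r ^ e := by ring

lemma tsum_gfun_pp_le (k : ℕ) {p : ℕ} (hp : p.Prime) :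
    ∑' e : ℕ, gfun k (p ^ e) ≤ ((1 - (p : ℝ)⁻¹)⁻¹) ^ k := by
  have hx0 : (0 : ℝ) ≤ (p : ℝ)⁻¹ := by positivity
  have hx1 : ((p : ℝ))⁻¹ < 1 := inv_lt_one_of_one_lt₀ (by exact_mod_cast hp.one_lt)
  refine Summable.tsum_le_of_sum_le (summable_gfun_pp k hp) fun s => ?_
  calc ∑ e ∈ s, gfun k (p ^ e)
      = ∑ b ∈ s.image (fun e => 2 * e), (tauk k (p ^ b) : ℝ) * ((p : ℝ)⁻¹) ^ b := by
        rw [Finset.sum_image (fun a _ b _ h => by omega)]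
        exact Finset.sum_congr rfl fun e _ => gfun_pp k p e
    _ ≤ ∑ b ∈ range (2 * s.sup id + 1), (tauk k (p ^ b) : ℝ) * ((p : ℝ)⁻¹) ^ b := by
        refine Finset.sum_le_sum_of_subset_of_nonneg ?_ fun b _ _ => by positivity
        intro b hb
        obtain ⟨e, he, rfl⟩ := Finset.mem_image.mp hb
        have : e ≤ s.sup id := Finset.le_sup (f := id) he
        exact Finset.mem_range.mpr (by omega)
    _ ≤ ((1 - (p : ℝ)⁻¹)⁻¹) ^ k := local_sum_le hp hx0 hx1 k _

lemma tsum_gfun_pp_le_big {k p : ℕ} (hp : p.Prime) (hk : 1 ≤ k) (hkp : 2 * k ≤ p) :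
    ∑' e : ℕ, gfun k (p ^ e) ≤ 1 + 2 * (k : ℝ) ^ 2 / (p : ℝ) ^ 2 := by
  have hp0 : (0 : ℝ) < p := by exact_mod_cast hp.pos
  set t : ℝ := (k : ℝ) ^ 2 / (p : ℝ) ^ 2 with htdef
  have ht0 : 0 ≤ t := by positivity
  have hk1 : (1 : ℝ) ≤ (k : ℝ) := by exact_mod_cast hk
  have hkp' : 2 * (k : ℝ) ≤ (p : ℝ) := by exact_mod_cast hkp
  have ht : t ≤ 1 / 4 := by
    rw [htdef, div_le_iff₀ (by positivity)]
    nlinarith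
  have h1t : 0 < 1 - t := by linarith
  have hfinal : (1 - t)⁻¹ ≤ 1 + 2 * t := by
    rw [inv_eq_one_div, div_le_iff₀ h1t]
    nlinarith
  have h2t : 1 + 2 * t = 1 + 2 * (k : ℝ) ^ 2 / (p : ℝ) ^ 2 := by
    rw [htdef]; ring
  rw [← h2t]
  refine Summable.tsum_le_of_sum_le (summable_gfun_pp k hp) fun s => ?_
  calc ∑ e ∈ s, gfun k (p ^ e)
      ≤ ∑ e ∈ s, t ^ e := by
        refine Finset.sum_le_sum fun e _ => ?_
        rw [gfun_pp]
        have h1 : (tauk k (p ^ (2 * e)) : ℝ) ≤ (k : ℝ) ^ (2 * e) := by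
          exact_mod_cast tauk_pp_le_k_pow hp k (2 * e)
        calc (tauk k (p ^ (2 * e)) : ℝ) * ((p : ℝ)⁻¹) ^ (2 * e)
            ≤ (k : ℝ) ^ (2 * e) * ((p : ℝ)⁻¹) ^ (2 * e) :=
              mul_le_mul_of_nonneg_right h1 (by positivity)
          _ = t ^ e := by
              have hbase : ((k:ℝ) * (p:ℝ)⁻¹) ^ 2 = (k:ℝ) ^ 2 / (p:ℝ) ^ 2 := by
                rw [mul_pow, inv_pow, div_eq_mul_inv]
              rw [htdef, ← mul_pow, pow_mul, hbase]
    _ ≤ ∑ e ∈ range (s.sup id + 1), t ^ e := by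
        refine Finset.sum_le_sum_of_subset_of_nonneg ?_ fun e _ _ => by positivity
        intro e he
        exact Finset.mem_range.mpr (Nat.lt_succ_of_le (Finset.le_sup (f := id) he))
    _ ≤ (1 - t)⁻¹ := geom_real_le ht0 (by linarith) _
    _ ≤ 1 + 2 * t := hfinal

end TaukAux

namespace TaukAux

open Finset

lemma theta_le (M : ℕ) (hM : 1 ≤ M) :
    ∑ p ∈ Nat.primesBelow M, Real.log p ≤ (M : ℝ) * Real.log 4 := by
  have hprim : ((primorial (M - 1) : ℕ) : ℝ) = ∏ p ∈ Nat.primesBelow M, (p : ℝ) := by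
    rw [primorial, Nat.primesBelow, Nat.sub_add_cancel hM]
    push_cast
    rfl
  have hne : ∀ p ∈ Nat.primesBelow M, (p : ℝ) ≠ 0 := fun p hp =>
    Nat.cast_ne_zero.mpr (Nat.prime_of_mem_primesBelow hp).pos.ne'
  have hlogprod : ∑ p ∈ Nat.primesBelow M, Real.log p
      = Real.log ((primorial (M - 1) : ℕ) : ℝ) := by
    rw [hprim, Real.log_prod hne]
  rw [hlogprod]
  have hle : ((primorial (M - 1) : ℕ) : ℝ) ≤ (4 : ℝ) ^ (M - 1) := by
    exact_mod_cast primorial_le_4_pow (M - 1)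
  calc Real.log ((primorial (M - 1) : ℕ) : ℝ)
      ≤ Real.log ((4 : ℝ) ^ (M - 1)) := by
        apply Real.log_le_log (by exact_mod_cast (primorial_pos (M - 1))) hle
    _ = ((M - 1 : ℕ) : ℝ) * Real.log 4 := by rw [Real.log_pow]
    _ ≤ (M : ℝ) * Real.log 4 := by
        have h4 : (0:ℝ) ≤ Real.log 4 := Real.log_nonneg (by norm_num)
        have : ((M - 1 : ℕ) : ℝ) ≤ (M : ℝ) := by exact_mod_cast Nat.sub_le M 1
        exact mul_le_mul_of_nonneg_right this h4

lemma log_four : Real.log 4 = 2 * Real.log 2 := by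
  rw [show (4 : ℝ) = 2 ^ 2 by norm_num, Real.log_pow]
  push_cast; ring

lemma fiber_bound (j : ℕ) (hj : 1 ≤ j) (M : ℕ) :
    ∑ p ∈ (Nat.primesBelow M).filter (fun p => Nat.log 2 p = j), (1 : ℝ) / p
      ≤ 4 / (j : ℝ) := by
  set F := (Nat.primesBelow M).filter (fun p => Nat.log 2 p = j) with hF
  have hmem : ∀ p ∈ F, 2 ^ j ≤ p ∧ p < 2 ^ (j + 1) ∧ p.Prime := by
    intro p hp
    obtain ⟨hp1, hp2⟩ := Finset.mem_filter.mp hp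
    have hprime := Nat.prime_of_mem_primesBelow hp1
    refine ⟨?_, ?_, hprime⟩
    · rw [← hp2]; exact Nat.pow_log_le_self 2 hprime.pos.ne'
    · rw [← hp2]; exact Nat.lt_pow_succ_log_self (by norm_num) p
  have hj0 : (0 : ℝ) < (j : ℝ) := by exact_mod_cast hj
  have hlog2 : (0 : ℝ) < Real.log 2 := Real.log_pos (by norm_num)
  have hcard : (F.card : ℝ) * ((j : ℝ) * Real.log 2)
      ≤ (2 : ℝ) ^ (j + 1) * Real.log 4 := by
    calc (F.card : ℝ) * ((j : ℝ) * Real.log 2)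
        = ∑ _p ∈ F, (j : ℝ) * Real.log 2 := by rw [Finset.sum_const, nsmul_eq_mul]
      _ ≤ ∑ p ∈ F, Real.log p := by
          refine Finset.sum_le_sum fun p hp => ?_
          have h2j : ((2 : ℕ) ^ j : ℝ) ≤ (p : ℝ) := by exact_mod_cast (hmem p hp).1
          calc (j : ℝ) * Real.log 2 = Real.log ((2 : ℝ) ^ j) := by rw [Real.log_pow]
            _ ≤ Real.log p := Real.log_le_log (by positivity) (by exact_mod_cast h2j)
      _ ≤ ∑ p ∈ Nat.primesBelow (2 ^ (j + 1)), Real.log p := by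
          refine Finset.sum_le_sum_of_subset_of_nonneg ?_ fun p hp _ => ?_
          · intro p hp
            exact Nat.mem_primesBelow.mpr ⟨(hmem p hp).2.1, (hmem p hp).2.2⟩
          · have : (1 : ℝ) ≤ (p : ℝ) :=
              by exact_mod_cast (Nat.prime_of_mem_primesBelow hp).pos
            exact Real.log_nonneg this
      _ ≤ ((2 ^ (j + 1) : ℕ) : ℝ) * Real.log 4 := theta_le _ (Nat.one_le_two_pow)
      _ = (2 : ℝ) ^ (j + 1) * Real.log 4 := by push_cast; ring
  have hcard' : (F.card : ℝ) ≤ (2 : ℝ) ^ (j + 2) / (j : ℝ) := by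
    have h2 : (2 : ℝ) ^ (j + 1) * Real.log 4
        = ((2 : ℝ) ^ (j + 2) / (j : ℝ)) * ((j : ℝ) * Real.log 2) := by
      rw [log_four]
      field_simp
      ring
    rw [h2] at hcard
    exact le_of_mul_le_mul_right hcard (by positivity)
  calc ∑ p ∈ F, (1 : ℝ) / p
      ≤ ∑ _p ∈ F, (1 : ℝ) / (2 : ℝ) ^ j := by
        refine Finset.sum_le_sum fun p hp => ?_
        have h2j : ((2 : ℝ)) ^ j ≤ (p : ℝ) := by exact_mod_cast (hmem p hp).1
        exact one_div_le_one_div_of_le (by positivity) h2j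
    _ = (F.card : ℝ) * (1 / (2 : ℝ) ^ j) := by rw [Finset.sum_const, nsmul_eq_mul]
    _ ≤ ((2 : ℝ) ^ (j + 2) / (j : ℝ)) * (1 / (2 : ℝ) ^ j) :=
        mul_le_mul_of_nonneg_right hcard' (by positivity)
    _ = 4 / (j : ℝ) := by
        rw [pow_add]
        field_simp
        ring

lemma harmonic_Icc (J : ℕ) : ∑ j ∈ Finset.Icc 1 J, (1 : ℝ) / j ≤ 1 + Real.log J := by
  have h1 : Finset.Icc 1 J = (Finset.range J).image (fun i => i + 1) := by
    ext j
    simp only [Finset.mem_Icc, Finset.mem_image, Finset.mem_range]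
    constructor
    · rintro ⟨h1, h2⟩; exact ⟨j - 1, by omega, by omega⟩
    · rintro ⟨i, hi, rfl⟩; omega
  have h2 : ∑ j ∈ Finset.Icc 1 J, (1 : ℝ) / j = (harmonic J : ℝ) := by
    rw [h1, Finset.sum_image (fun a _ b _ h => by omega), harmonic]
    push_cast
    exact Finset.sum_congr rfl fun i _ => by rw [one_div]
  rw [h2]
  exact harmonic_le_one_add_log J

lemma mertens_weak {M : ℕ} (hM : 4 ≤ M) :
    ∑ p ∈ Nat.primesBelow M, (1 : ℝ) / p ≤ 4 * Real.log (Real.log M) + 12 := by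
  set J := Nat.log 2 M with hJ
  have hJ1 : 1 ≤ J := Nat.le_log_of_pow_le one_lt_two (by omega)
  have hmaps : ∀ p ∈ Nat.primesBelow M, Nat.log 2 p ∈ Finset.Icc 1 J := by
    intro p hp
    have hprime := Nat.prime_of_mem_primesBelow hp
    have hlt := Nat.lt_of_mem_primesBelow hp
    refine Finset.mem_Icc.mpr ⟨?_, ?_⟩
    · exact Nat.le_log_of_pow_le one_lt_two (by simpa using hprime.two_le)
    · exact Nat.log_mono_right (le_of_lt hlt)
  rw [← Finset.sum_fiberwise_of_maps_to hmaps]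
  have hlogM : (1 : ℝ) < Real.log M := by
    have h4 : (4 : ℝ) ≤ (M : ℝ) := by exact_mod_cast hM
    have : Real.log 4 ≤ Real.log M := Real.log_le_log (by norm_num) h4
    have h2 : (1.3862 : ℝ) < Real.log 4 := by
      rw [log_four]
      have := Real.log_two_gt_d9
      linarith
    linarith
  have hJle : (J : ℝ) ≤ 2 * Real.log M := by
    have hpow : ((2 : ℕ) ^ J : ℝ) ≤ (M : ℝ) := by
      exact_mod_cast Nat.pow_log_le_self 2 (by omega : M ≠ 0)
    have hlog : (J : ℝ) * Real.log 2 ≤ Real.log M := by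
      rw [← Real.log_pow]
      exact Real.log_le_log (by positivity) (by exact_mod_cast hpow)
    have h2 : (0.6931471803 : ℝ) < Real.log 2 := Real.log_two_gt_d9
    nlinarith [Nat.cast_nonneg (α := ℝ) J]
  calc ∑ j ∈ Finset.Icc 1 J,
        ∑ p ∈ (Nat.primesBelow M).filter (fun p => Nat.log 2 p = j), (1 : ℝ) / p
      ≤ ∑ j ∈ Finset.Icc 1 J, 4 / (j : ℝ) := by
        refine Finset.sum_le_sum fun j hj => ?_
        exact fiber_bound j (Finset.mem_Icc.mp hj).1 M
    _ = 4 * ∑ j ∈ Finset.Icc 1 J, (1 : ℝ) / j := by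
        rw [Finset.mul_sum]
        exact Finset.sum_congr rfl fun j _ => by ring
    _ ≤ 4 * (1 + Real.log J) := by
        have := harmonic_Icc J
        linarith
    _ ≤ 4 * Real.log (Real.log M) + 12 := by
        have hJpos : (0 : ℝ) < (J : ℝ) := by exact_mod_cast hJ1
        have h1 : Real.log J ≤ Real.log (2 * Real.log M) :=
          Real.log_le_log hJpos hJle
        have h2 : Real.log (2 * Real.log M) = Real.log 2 + Real.log (Real.log M) :=
          Real.log_mul (by norm_num) (by linarith)
        have h3 : Real.log 2 < 0.6931471808 := Real.log_two_lt_d9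
        linarith

lemma sum_sq_tail (a N : ℕ) (ha : 2 ≤ a) :
    ∑ n ∈ Finset.Ico a N, (1 : ℝ) / (n : ℝ) ^ 2 ≤ 1 / ((a : ℝ) - 1) := by
  set g : ℕ → ℝ := fun n => 1 / ((n : ℝ) - 1) with hg
  have key : ∀ n ∈ Finset.Ico a N, (1 : ℝ) / (n : ℝ) ^ 2 ≤ g n - g (n + 1) := by
    intro n hn
    have hn2 : 2 ≤ n := le_trans ha (Finset.mem_Ico.mp hn).1
    have hn2' : (2 : ℝ) ≤ (n : ℝ) := by exact_mod_cast hn2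
    have h1 : (0 : ℝ) < (n : ℝ) - 1 := by linarith
    have h2 : (0 : ℝ) < (n : ℝ) := by linarith
    have hgn : g n - g (n + 1) = 1 / (((n : ℝ) - 1) * (n : ℝ)) := by
      rw [hg]
      push_cast
      rw [add_sub_cancel_right]
      field_simp
      ring
    rw [hgn, div_le_div_iff₀ (by positivity) (by positivity)]
    nlinarith
  calc ∑ n ∈ Finset.Ico a N, (1 : ℝ) / (n : ℝ) ^ 2
      ≤ ∑ n ∈ Finset.Ico a N, (g n - g (n + 1)) := Finset.sum_le_sum key
    _ = g a - g (a + (N - a)) := by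
        rw [Finset.sum_Ico_eq_sum_range]
        exact Finset.sum_range_sub' (fun i => g (a + i)) (N - a)
    _ ≤ g a := by
        have hpos : (0 : ℝ) ≤ g (a + (N - a)) := by
          have h2 : (2 : ℝ) ≤ ((a + (N - a) : ℕ) : ℝ) := by
            have : 2 ≤ a + (N - a) := le_trans ha (Nat.le_add_right a _)
            exact_mod_cast this
          have : (0:ℝ) < ((a + (N - a) : ℕ) : ℝ) - 1 := by linarith
          simp only [hg]
          positivity
        linarith
    _ = 1 / ((a : ℝ) - 1) := rfl

end TaukAux

namespace TaukAux

open Finset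

lemma pp_factor_le_exp {k p : ℕ} (hp : p.Prime) :
    ((1 - (p : ℝ)⁻¹)⁻¹) ^ k ≤ Real.exp (2 * k / p) := by
  have hp2 : (2 : ℝ) ≤ (p : ℝ) := by exact_mod_cast hp.two_le
  have hu1 : (0 : ℝ) < (p : ℝ)⁻¹ := by positivity
  have hu2 : (p : ℝ)⁻¹ ≤ 1 / 2 := by
    rw [inv_eq_one_div]
    apply div_le_div_of_nonneg_left (by norm_num) (by norm_num) hp2 |>.trans_eq rfl
  have h1 : (0 : ℝ) < 1 - (p : ℝ)⁻¹ := by linarith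
  have step : (1 - (p : ℝ)⁻¹)⁻¹ ≤ Real.exp (2 / p) := by
    have hA : 1 + 2 / (p : ℝ) ≤ Real.exp (2 / p) := by
      have := Real.add_one_le_exp (2 / (p : ℝ))
      linarith
    have hB : (1 + 2 / (p : ℝ)) * (1 - (p : ℝ)⁻¹) ≥ 1 := by
      rw [div_eq_mul_inv]
      nlinarith
    have h2p : (0 : ℝ) < 1 + 2 / (p : ℝ) := by positivity
    rw [inv_eq_one_div, div_le_iff₀ h1]
    calc (1 : ℝ) ≤ (1 + 2 / (p : ℝ)) * (1 - (p : ℝ)⁻¹) := hB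
      _ ≤ Real.exp (2 / p) * (1 - (p : ℝ)⁻¹) :=
        mul_le_mul_of_nonneg_right hA h1.le
  calc ((1 - (p : ℝ)⁻¹)⁻¹) ^ k ≤ (Real.exp (2 / p)) ^ k :=
        pow_le_pow_left₀ (by positivity) step k
    _ = Real.exp (2 * k / p) := by
        rw [← Real.exp_nat_mul]
        congr 1
        ring

lemma prod_primes_le {k : ℕ} (hk : 2 ≤ k) (N : ℕ) :
    ∏ p ∈ Nat.primesBelow N, (∑' e : ℕ, gfun k (p ^ e))
      ≤ Real.exp ((8 * k : ℝ) * Real.log (Real.log (2 * k)) + 26 * k) := by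
  have hk0 : (0 : ℝ) < (k : ℝ) := by positivity
  have hknn : (1 : ℝ) ≤ (k : ℝ) := by exact_mod_cast (by omega : 1 ≤ k)
  rw [← Finset.prod_filter_mul_prod_filter_not (Nat.primesBelow N) (fun p => p < 2 * k)]
  have hA : ∏ p ∈ (Nat.primesBelow N).filter (fun p => p < 2 * k),
      (∑' e : ℕ, gfun k (p ^ e))
      ≤ Real.exp ((8 * k : ℝ) * Real.log (Real.log (2 * k)) + 24 * k) := by
    calc ∏ p ∈ (Nat.primesBelow N).filter (fun p => p < 2 * k),
          (∑' e : ℕ, gfun k (p ^ e))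
        ≤ ∏ p ∈ (Nat.primesBelow N).filter (fun p => p < 2 * k),
            Real.exp (2 * k / p) := by
          refine Finset.prod_le_prod (fun p hp => tsum_nonneg fun e => gfun_nonneg _ _)
            (fun p hp => ?_)
          have hprime := Nat.prime_of_mem_primesBelow (Finset.mem_filter.mp hp).1
          exact (tsum_gfun_pp_le k hprime).trans (pp_factor_le_exp hprime)
      _ = Real.exp (∑ p ∈ (Nat.primesBelow N).filter (fun p => p < 2 * k), 2 * k / p) := by
          rw [Real.exp_sum]
      _ ≤ Real.exp (∑ p ∈ Nat.primesBelow (2 * k), 2 * k / p) := by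
          apply Real.exp_le_exp.mpr
          refine Finset.sum_le_sum_of_subset_of_nonneg ?_ fun p _ _ => by positivity
          intro p hp
          obtain ⟨hp1, hp2⟩ := Finset.mem_filter.mp hp
          exact Nat.mem_primesBelow.mpr ⟨hp2, Nat.prime_of_mem_primesBelow hp1⟩
      _ ≤ Real.exp ((8 * k : ℝ) * Real.log (Real.log (2 * k)) + 24 * k) := by
          apply Real.exp_le_exp.mpr
          have hsum := mertens_weak (M := 2 * k) (by omega)
          have hc : ((2 * k : ℕ) : ℝ) = 2 * (k : ℝ) := by push_cast; ring
          rw [hc] at hsum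
          have heq : ∑ p ∈ Nat.primesBelow (2 * k), (2 * (k : ℝ)) / p
              = 2 * (k : ℝ) * ∑ p ∈ Nat.primesBelow (2 * k), (1 : ℝ) / p := by
            rw [Finset.mul_sum]
            exact Finset.sum_congr rfl fun p _ => by ring
          rw [heq]
          nlinarith [hsum]
  have hB : ∏ p ∈ (Nat.primesBelow N).filter (fun p => ¬ p < 2 * k),
      (∑' e : ℕ, gfun k (p ^ e)) ≤ Real.exp (2 * k) := by
    calc ∏ p ∈ (Nat.primesBelow N).filter (fun p => ¬ p < 2 * k),
          (∑' e : ℕ, gfun k (p ^ e))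
        ≤ ∏ p ∈ (Nat.primesBelow N).filter (fun p => ¬ p < 2 * k),
            Real.exp (2 * (k : ℝ) ^ 2 / (p : ℝ) ^ 2) := by
          refine Finset.prod_le_prod (fun p hp => tsum_nonneg fun e => gfun_nonneg _ _)
            (fun p hp => ?_)
          obtain ⟨hp1, hp2⟩ := Finset.mem_filter.mp hp
          have hprime := Nat.prime_of_mem_primesBelow hp1
          have hbig : 2 * k ≤ p := by omega
          calc ∑' e : ℕ, gfun k (p ^ e)
              ≤ 1 + 2 * (k : ℝ) ^ 2 / (p : ℝ) ^ 2 :=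
                tsum_gfun_pp_le_big hprime (by omega) hbig
            _ ≤ Real.exp (2 * (k : ℝ) ^ 2 / (p : ℝ) ^ 2) := by
                have := Real.add_one_le_exp (2 * (k : ℝ) ^ 2 / (p : ℝ) ^ 2)
                linarith
      _ = Real.exp (∑ p ∈ (Nat.primesBelow N).filter (fun p => ¬ p < 2 * k),
            2 * (k : ℝ) ^ 2 / (p : ℝ) ^ 2) := by rw [Real.exp_sum]
      _ ≤ Real.exp (2 * k) := by
          apply Real.exp_le_exp.mpr
          have hsub : (Nat.primesBelow N).filter (fun p => ¬ p < 2 * k)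
              ⊆ Finset.Ico (2 * k) N := by
            intro p hp
            obtain ⟨hp1, hp2⟩ := Finset.mem_filter.mp hp
            exact Finset.mem_Ico.mpr ⟨by omega, Nat.lt_of_mem_primesBelow hp1⟩
          have h1 : ∑ p ∈ (Nat.primesBelow N).filter (fun p => ¬ p < 2 * k),
              2 * (k : ℝ) ^ 2 / (p : ℝ) ^ 2
              ≤ ∑ n ∈ Finset.Ico (2 * k) N, 2 * (k : ℝ) ^ 2 / (n : ℝ) ^ 2 :=
            Finset.sum_le_sum_of_subset_of_nonneg hsub fun n hn _ => by positivity
          have h2 : ∑ n ∈ Finset.Ico (2 * k) N, 2 * (k : ℝ) ^ 2 / (n : ℝ) ^ 2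
              = 2 * (k : ℝ) ^ 2 * ∑ n ∈ Finset.Ico (2 * k) N, 1 / (n : ℝ) ^ 2 := by
            rw [Finset.mul_sum]
            exact Finset.sum_congr rfl fun n _ => by ring
          have h3 : ∑ n ∈ Finset.Ico (2 * k) N, (1 : ℝ) / (n : ℝ) ^ 2
              ≤ 1 / (((2 * k : ℕ) : ℝ) - 1) := sum_sq_tail (2 * k) N (by omega)
          have h4 : (((2 * k : ℕ) : ℝ) - 1) = 2 * (k : ℝ) - 1 := by push_cast; ring
          rw [h4] at h3
          have h5 : (0 : ℝ) < 2 * (k : ℝ) - 1 := by linarith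
          have h6 : 2 * (k : ℝ) ^ 2 * (1 / (2 * (k : ℝ) - 1)) ≤ 2 * k := by
            rw [mul_one_div, div_le_iff₀ h5]
            nlinarith
          have h7 : (0 : ℝ) ≤ 2 * (k : ℝ) ^ 2 := by positivity
          calc ∑ p ∈ (Nat.primesBelow N).filter (fun p => ¬ p < 2 * k),
                2 * (k : ℝ) ^ 2 / (p : ℝ) ^ 2
              ≤ 2 * (k : ℝ) ^ 2 * ∑ n ∈ Finset.Ico (2 * k) N, 1 / (n : ℝ) ^ 2 := by
                rw [← h2]; exact h1
            _ ≤ 2 * (k : ℝ) ^ 2 * (1 / (2 * (k : ℝ) - 1)) :=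
                mul_le_mul_of_nonneg_left h3 h7
            _ ≤ 2 * k := h6
  have hBnn : (0 : ℝ) ≤ ∏ p ∈ (Nat.primesBelow N).filter (fun p => ¬ p < 2 * k),
      (∑' e : ℕ, gfun k (p ^ e)) :=
    Finset.prod_nonneg fun p _ => tsum_nonneg fun e => gfun_nonneg _ _
  have hAnn : (0 : ℝ) ≤ ∏ p ∈ (Nat.primesBelow N).filter (fun p => p < 2 * k),
      (∑' e : ℕ, gfun k (p ^ e)) :=
    Finset.prod_nonneg fun p _ => tsum_nonneg fun e => gfun_nonneg _ _
  calc (∏ p ∈ (Nat.primesBelow N).filter (fun p => p < 2 * k), (∑' e : ℕ, gfun k (p ^ e)))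
        * ∏ p ∈ (Nat.primesBelow N).filter (fun p => ¬ p < 2 * k), (∑' e : ℕ, gfun k (p ^ e))
      ≤ Real.exp ((8 * k : ℝ) * Real.log (Real.log (2 * k)) + 24 * k) * Real.exp (2 * k) :=
        mul_le_mul hA hB hBnn (Real.exp_nonneg _)
    _ = Real.exp ((8 * k : ℝ) * Real.log (Real.log (2 * k)) + 26 * k) := by
        rw [← Real.exp_add]
        congr 1
        ring

lemma partial_sum_le {k : ℕ} (hk : 2 ≤ k) (s : Finset ℕ+) :
    ∑ m ∈ s, gfun k (m : ℕ)
      ≤ Real.exp ((8 * k : ℝ) * Real.log (Real.log (2 * k)) + 26 * k) := by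
  classical
  set N : ℕ := (s.sup fun m => (m : ℕ)) + 1 with hN
  obtain ⟨hsummable, hhassum⟩ :=
    EulerProduct.summable_and_hasSum_smoothNumbers_prod_primesBelow_tsum
      (f := gfun k) (gfun_one k) (fun {m n} h => gfun_mul k h)
      (fun {p} hp => Summable.congr (summable_gfun_pp k hp)
        (fun e => (Real.norm_of_nonneg (gfun_nonneg _ _)).symm)) N
  have hsum_g : Summable fun m : N.smoothNumbers => gfun k m := hhassum.summable
  set s' : Finset ℕ := Finset.image (fun m : ℕ+ => (m : ℕ)) s with hs'
  have hsub : ∀ n ∈ s', n ∈ N.smoothNumbers := by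
    intro n hn
    obtain ⟨m, hm, rfl⟩ := Finset.mem_image.mp hn
    rw [Nat.mem_smoothNumbers]
    refine ⟨m.pos.ne', fun p hp => ?_⟩
    have hdvd : p ∣ (m : ℕ) := Nat.dvd_of_mem_primeFactorsList hp
    have hle : p ≤ (m : ℕ) := Nat.le_of_dvd m.pos hdvd
    have : (m : ℕ) ≤ s.sup fun m => (m : ℕ) := Finset.le_sup (f := fun m : ℕ+ => (m : ℕ)) hm
    omega
  have step1 : ∑ m ∈ s, gfun k (m : ℕ) = ∑ n ∈ s', gfun k n := by
    rw [hs', Finset.sum_image fun a _ b _ h => PNat.coe_injective h]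
  have step2 : ∑ n ∈ s', gfun k n ≤ ∑' m : N.smoothNumbers, gfun k m := by
    rw [_root_.tsum_subtype]
    have heq : ∀ n ∈ s', gfun k n = Set.indicator N.smoothNumbers (gfun k) n := by
      intro n hn
      rw [Set.indicator_of_mem (hsub n hn)]
    rw [Finset.sum_congr rfl heq]
    refine Summable.sum_le_tsum s' (fun n _ => Set.indicator_nonneg (fun x _ => gfun_nonneg _ _) n) ?_
    exact (summable_subtype_iff_indicator (s := N.smoothNumbers) (f := gfun k)).mp hsum_g
  calc ∑ m ∈ s, gfun k (m : ℕ) = ∑ n ∈ s', gfun k n := step1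
    _ ≤ ∑' m : N.smoothNumbers, gfun k m := step2
    _ = ∏ p ∈ Nat.primesBelow N, (∑' e : ℕ, gfun k (p ^ e)) := hhassum.tsum_eq
    _ ≤ Real.exp ((8 * k : ℝ) * Real.log (Real.log (2 * k)) + 26 * k) :=
        prod_primes_le hk N

end TaukAux

open TaukAux in
/-- There is an absolute constant `B > 0` such that for all `k ≥ 2`,
`∑_{m ≥ 1} τ_k(m²)/m² ≤ (log(Bk))^{11k}`. -/
theorem stmt_9 : ∃ B : ℝ, 0 < B ∧ ∀ k : ℕ, 2 ≤ k →
    ∑' m : ℕ+, (tauk k ((m : ℕ) ^ 2) : ℝ) / (m : ℝ) ^ 2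
      ≤ (Real.log (B * k)) ^ (11 * k) := by
  classical
  refine ⟨Real.exp (Real.exp 10), Real.exp_pos _, fun k hk => ?_⟩
  set B : ℝ := Real.exp (Real.exp 10) with hB
  have hk1 : (1 : ℝ) ≤ (k : ℝ) := by exact_mod_cast (by omega : 1 ≤ k)
  have hk2 : (2 : ℝ) ≤ (k : ℝ) := by exact_mod_cast hk
  have hlogB : Real.log B = Real.exp 10 := Real.log_exp _
  have h10 : (11 : ℝ) ≤ Real.exp 10 := by nlinarith [Real.add_one_le_exp (10 : ℝ)]
  have hB2 : (2 : ℝ) ≤ B := by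
    have := Real.add_one_le_exp (Real.exp 10)
    nlinarith
  have hBk_pos : (0 : ℝ) < B * k := by positivity
  have hlog2k_pos : (0 : ℝ) < Real.log (2 * (k : ℝ)) := by
    apply Real.log_pos; nlinarith
  have hlogBk : Real.exp 10 ≤ Real.log (B * k) := by
    calc Real.exp 10 = Real.log B := hlogB.symm
      _ ≤ Real.log (B * k) :=
          Real.log_le_log (Real.exp_pos _) (by nlinarith [Real.exp_pos (Real.exp 10)])
  have hlogBk_pos : (0 : ℝ) < Real.log (B * k) := lt_of_lt_of_le (Real.exp_pos 10) hlogBk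
  have hloglogBk10 : (10 : ℝ) ≤ Real.log (Real.log (B * k)) := by
    calc (10 : ℝ) = Real.log (Real.exp 10) := (Real.log_exp _).symm
      _ ≤ Real.log (Real.log (B * k)) := Real.log_le_log (Real.exp_pos _) hlogBk
  have hmono : Real.log (Real.log (2 * (k : ℝ))) ≤ Real.log (Real.log (B * k)) := by
    apply Real.log_le_log hlog2k_pos
    apply Real.log_le_log (by nlinarith) (by nlinarith)
  have hkey : Real.exp ((8 * k : ℝ) * Real.log (Real.log (2 * (k : ℝ))) + 26 * k)
      ≤ (Real.log (B * k)) ^ (11 * k) := by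
    have h1 : (8 * (k : ℝ)) * Real.log (Real.log (2 * (k : ℝ))) + 26 * k
        ≤ ((11 * k : ℕ) : ℝ) * Real.log (Real.log (B * k)) := by
      have e1 := mul_le_mul_of_nonneg_left hmono (by positivity : (0 : ℝ) ≤ 8 * (k : ℝ))
      have e2 := mul_le_mul_of_nonneg_left hloglogBk10 (by positivity : (0 : ℝ) ≤ 3 * (k : ℝ))
      push_cast
      nlinarith
    calc Real.exp ((8 * k : ℝ) * Real.log (Real.log (2 * (k : ℝ))) + 26 * k)
        ≤ Real.exp (((11 * k : ℕ) : ℝ) * Real.log (Real.log (B * k))) :=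
          Real.exp_le_exp.mpr h1
      _ = (Real.exp (Real.log (Real.log (B * k)))) ^ (11 * k) := Real.exp_nat_mul _ _
      _ = (Real.log (B * k)) ^ (11 * k) := by rw [Real.exp_log hlogBk_pos]
  have hfun : ∑' m : ℕ+, (tauk k ((m : ℕ) ^ 2) : ℝ) / (m : ℝ) ^ 2
      = ∑' m : ℕ+, gfun k (m : ℕ) := by
    refine tsum_congr fun m => ?_
    rw [gfun]
  rw [hfun]
  by_cases hsumm : Summable (fun m : ℕ+ => gfun k (m : ℕ))
  · refine le_trans (Summable.tsum_le_of_sum_le hsumm fun s => ?_) hkey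
    have := partial_sum_le hk s
    convert this using 3
  · rw [tsum_eq_zero_of_not_summable hsumm]
    exact pow_nonneg hlogBk_pos.le _
end
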